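/- arXiv:2207.13314 — 2 statements merged into one kernel-verified Lean document; each statement's English description precedes it below -/
import Mathlib

section
/- For all real a > 0, (1 + 1/a)^(a + 1/2) > e. -/
lemma key_aux (u : ℝ) (hu0 : 0 < u) (hu1 : u < 1) :
    2 * u < Real.log (1 + u) - Real.log (1 - u) := by
  set f : ℝ → ℝ := fun x => Real.log (1 + x) - Real.log (1 - x) - 2 * x with hf
  have hmono : StrictMonoOn f (Set.Ico 0 1) := by
    apply strictMonoOn_of_deriv_pos (convex_Ico 0 1)
    · apply ContinuousOn.sub
      apply ContinuousOn.sub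
      · exact (Real.continuousOn_log.comp (by fun_prop)
          (fun x hx => by simp only [Set.mem_Ico] at hx; intro h; simp at h; linarith [hx.1]))
      · exact (Real.continuousOn_log.comp (by fun_prop)
          (fun x hx => by simp only [Set.mem_Ico] at hx; intro h; simp at h; linarith [hx.2]))
      · fun_prop
    · intro x hx
      rw [interior_Ico] at hx
      obtain ⟨hx0, hx1⟩ := hx
      have h1 : (0:ℝ) < 1 + x := by linarith
      have h2 : (0:ℝ) < 1 - x := by linarith
      have d1 : HasDerivAt (fun x : ℝ => Real.log (1 + x)) ((1 + x)⁻¹) x := by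
        have := (Real.hasDerivAt_log h1.ne').comp x ((hasDerivAt_id x).const_add 1)
        simp at this; exact this
      have d2 : HasDerivAt (fun x : ℝ => Real.log (1 - x)) (-(1 - x)⁻¹) x := by
        have := (Real.hasDerivAt_log h2.ne').comp x ((hasDerivAt_id x).neg.const_add 1)
        simp at this; exact this
      have d3 : HasDerivAt f ((1 + x)⁻¹ - (-(1 - x)⁻¹) - 2) x := by
        have h := ((d1.sub d2).sub ((hasDerivAt_id x).const_mul 2))
        simp at h ⊢; exact h
      rw [d3.deriv]
      rw [sub_neg_eq_add]
      have key : (1 + x)⁻¹ + (1 - x)⁻¹ - 2 = 2 * x ^ 2 / ((1 + x) * (1 - x)) := by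
        field_simp
        ring
      rw [key]
      positivity
  have h0 : f 0 = 0 := by simp [hf]
  have := hmono (Set.mem_Ico.mpr ⟨le_refl 0, one_pos⟩)
    (Set.mem_Ico.mpr ⟨hu0.le, hu1⟩) hu0
  rw [h0] at this
  simp only [hf] at this
  linarith

theorem stmt_1 (a : ℝ) (ha : 0 < a) :
    (1 + 1/a) ^ (a + 1/2) > Real.exp 1 := by
  set u : ℝ := 1 / (2 * a + 1) with hu
  have hu0 : 0 < u := by positivity
  have hu1 : u < 1 := by
    rw [hu, div_lt_one (by linarith)]; linarith
  have hbase : 1 + 1/a = (1 + u) / (1 - u) := by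
    rw [hu]
    field_simp
    ring
  have hbpos : (0:ℝ) < 1 + 1/a := by positivity
  rw [Real.rpow_def_of_pos hbpos, gt_iff_lt, Real.exp_lt_exp]
  have hlog : Real.log (1 + 1/a) = Real.log (1 + u) - Real.log (1 - u) := by
    rw [hbase, Real.log_div (by linarith) (by linarith)]
  rw [hlog]
  have hk := key_aux u hu0 hu1
  have hinv : a + 1/2 = 1 / (2 * u) := by
    rw [hu]; field_simp
  rw [hinv]
  rw [mul_one_div, lt_div_iff₀ (by linarith)]
  linarith
end

section
/- For all integers m, d ≥ 1, the binomial coefficient C(m+d, d) satisfies C(m+d, d) ≥ (1/√8) · √(1/d + 1/m) · (e · √((m/d)^2 + m/d))^d. -/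
open Real Stirling Nat

section Aux

lemma keylog (t : ℝ) (ht : 0 ≤ t) : 2*t/(2+t) ≤ Real.log (1+t) := by
  set f : ℝ → ℝ := fun y => Real.log (1+y) - 2*y/(2+y) with hf
  have hd : ∀ x : ℝ, 0 ≤ x → HasDerivAt f (1/(1+x) - 4/(2+x)^2) x := by
    intro x hx
    have h1x : (1:ℝ) + x ≠ 0 := by positivity
    have h2x : (2:ℝ) + x ≠ 0 := by positivity
    have h1 : HasDerivAt (fun y : ℝ => Real.log (1+y)) (1/(1+x)) x := by
      have := (Real.hasDerivAt_log h1x).comp x ((hasDerivAt_id x).const_add 1)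
      simpa [one_div, Function.comp_def] using this
    have h2 : HasDerivAt (fun y : ℝ => 2*y/(2+y)) (4/(2+x)^2) x := by
      have := (((hasDerivAt_id x).const_mul (2:ℝ)).div ((hasDerivAt_id x).const_add 2) h2x)
      refine this.congr_deriv ?_
      simp only [id]
      field_simp
      ring
    exact h1.sub h2
  have mono : MonotoneOn f (Set.Ici 0) := by
    apply monotoneOn_of_deriv_nonneg (convex_Ici (0:ℝ))
    · exact fun x hx => (hd x hx).continuousAt.continuousWithinAt
    · intro x hx
      rw [interior_Ici] at hx
      exact (hd x (le_of_lt (Set.mem_Ioi.mp hx))).differentiableAt.differentiableWithinAt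
    · intro x hx
      rw [interior_Ici] at hx
      have hx' : (0:ℝ) < x := hx
      rw [(hd x (le_of_lt hx')).deriv]
      have h1 : (0:ℝ) < 1 + x := by linarith
      have h2 : (0:ℝ) < (2 + x)^2 := by positivity
      rw [sub_nonneg, div_le_div_iff₀ h2 h1]
      nlinarith [sq_nonneg x]
  have h0 : f 0 = 0 := by simp [hf]
  have := mono (Set.self_mem_Ici) (Set.mem_Ici.mpr ht) ht
  rw [h0] at this
  simpa [hf, sub_nonneg] using this

lemma sqrtpi_le_stirling (n : ℕ) (hn : 1 ≤ n) : √π ≤ stirlingSeq n := by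
  obtain ⟨k, rfl⟩ : ∃ k, n = k + 1 := ⟨n - 1, (Nat.succ_pred_eq_of_pos hn).symm⟩
  have ht : Filter.Tendsto (stirlingSeq ∘ Nat.succ) Filter.atTop (nhds (√π)) :=
    tendsto_stirlingSeq_sqrt_pi.comp (Filter.tendsto_add_atTop_nat 1)
  exact stirlingSeq'_antitone.le_of_tendsto ht k

lemma fact_eq_stirling (n : ℕ) (hn : 1 ≤ n) :
    (n ! : ℝ) = stirlingSeq n * (√(2*n) * ((n:ℝ)/exp 1)^n) := by
  have h1 : (0:ℝ) < (n:ℝ) := by exact_mod_cast hn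
  have hden : (0:ℝ) < √(2*n) * ((n:ℝ)/exp 1)^n := by positivity
  rw [stirlingSeq, div_mul_cancel₀]
  exact ne_of_gt hden

lemma key_exp (m d : ℕ) (hm : 1 ≤ m) (hd : 1 ≤ d) :
    Real.exp 1 ^ (2*d) * (m:ℝ)^(2*m+d) ≤ ((m:ℝ)+(d:ℝ))^(2*m+d) := by
  have hM : (0:ℝ) < m := by exact_mod_cast hm
  have hD : (0:ℝ) < d := by exact_mod_cast hd
  set t : ℝ := d / m with htdef
  have ht : 0 ≤ t := by positivity
  have h1t : (0:ℝ) < 1 + t := by linarith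
  have hsplit : ((m:ℝ)+(d:ℝ)) = (m:ℝ) * (1 + t) := by rw [htdef]; field_simp
  rw [hsplit, mul_pow]
  rw [mul_comm ((m:ℝ)^(2*m+d))]
  apply mul_le_mul_of_nonneg_right _ (by positivity)
  have hlog : (2*(d:ℝ)) ≤ (2*(m:ℝ)+(d:ℝ)) * Real.log (1+t) := by
    have hk := keylog t ht
    have h2t : 2 * t / (2+t) = 2*(d:ℝ)/(2*(m:ℝ)+(d:ℝ)) := by
      rw [htdef]
      rw [div_eq_div_iff (by positivity) (by positivity)]
      field_simp
    have h2 : (2*(d:ℝ)/(2*(m:ℝ)+(d:ℝ))) * (2*(m:ℝ)+(d:ℝ)) = 2*(d:ℝ) := by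
      field_simp
    calc (2*(d:ℝ)) = (2*(d:ℝ)/(2*(m:ℝ)+(d:ℝ))) * (2*(m:ℝ)+(d:ℝ)) := h2.symm
      _ = (2 * t / (2+t)) * (2*(m:ℝ)+(d:ℝ)) := by rw [h2t]
      _ ≤ Real.log (1+t) * (2*(m:ℝ)+(d:ℝ)) := by
          apply mul_le_mul_of_nonneg_right hk (by positivity)
      _ = (2*(m:ℝ)+(d:ℝ)) * Real.log (1+t) := by ring
  calc Real.exp 1 ^ (2*d) = Real.exp (2*d) := by
        rw [← Real.exp_nat_mul]; norm_num
    _ ≤ Real.exp ((2*(m:ℝ)+(d:ℝ)) * Real.log (1+t)) := by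
        apply Real.exp_le_exp.mpr
        exact_mod_cast hlog
    _ = (1+t)^((2*m+d : ℕ) : ℝ) := by
        rw [Real.rpow_def_of_pos h1t]; push_cast; ring_nf
    _ = (1+t)^(2*m+d) := by
        rw [Real.rpow_natCast]

lemma s2_eq : stirlingSeq 2 = exp 1 ^ 2 / 4 := by
  rw [stirlingSeq]
  norm_num
  rw [show rexp 2 = rexp 1 ^ 2 by rw [← Real.exp_nat_mul]; norm_num]
  rw [div_pow]
  field_simp
  ring

lemma s3_eq : stirlingSeq 3 = 2 * exp 1 ^ 3 / (9 * √6) := by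
  rw [stirlingSeq]
  norm_num
  rw [div_pow]
  rw [show rexp 3 = rexp 1 ^ 3 by rw [← Real.exp_nat_mul]; norm_num]
  field_simp
  ring

lemma he2_bound : exp 1 ^ 2 ≤ 7.3890561 := by
  nlinarith [le_of_lt Real.exp_one_lt_d9, Real.exp_pos 1]

lemma he4_bound : exp 1 ^ 4 ≤ 54.5981502 := by
  calc exp 1 ^ 4 = (exp 1 ^ 2)^2 := by ring
    _ ≤ 7.3890561^2 := pow_le_pow_left₀ (by positivity) he2_bound 2
    _ ≤ 54.5981502 := by norm_num

lemma hsqrt2_bound : (1.4142135:ℝ) ≤ √2 :=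
  (Real.le_sqrt (by norm_num) (by norm_num)).mpr (by norm_num)
lemma hsqrt6_bound : (2.4494897:ℝ) ≤ √6 :=
  (Real.le_sqrt (by norm_num) (by norm_num)).mpr (by norm_num)
lemma hsqrtpi_bound : (1.772453:ℝ) ≤ √π :=
  (Real.le_sqrt (by norm_num) (le_of_lt Real.pi_pos)).mpr (by nlinarith [Real.pi_gt_d6])

lemma stirling_pos (k : ℕ) (hk : 1 ≤ k) : 0 < stirlingSeq k := by
  obtain ⟨j, rfl⟩ : ∃ j, k = j + 1 := ⟨k - 1, (Nat.succ_pred_eq_of_pos hk).symm⟩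
  exact Stirling.stirlingSeq'_pos j

lemma const_bound (m d : ℕ) (hm : 1 ≤ m) (hd : 1 ≤ d)
    (hnot : ¬((m = 1 ∧ d ≤ 2) ∨ (d = 1 ∧ m ≤ 2))) :
    stirlingSeq m * stirlingSeq d ≤ 2 * √π := by
  have hs1 : stirlingSeq 1 = exp 1 / √2 := Stirling.stirlingSeq_one
  have hmono : ∀ k n : ℕ, 1 ≤ k → k ≤ n → stirlingSeq n ≤ stirlingSeq k := by
    intro k n hk hkn
    obtain ⟨j, rfl⟩ : ∃ j, k = j + 1 := ⟨k - 1, (Nat.succ_pred_eq_of_pos hk).symm⟩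
    obtain ⟨i, rfl⟩ : ∃ i, n = i + 1 := ⟨n - 1, (Nat.succ_pred_eq_of_pos (hk.trans hkn)).symm⟩
    exact Stirling.stirlingSeq'_antitone (Nat.succ_le_succ_iff.mp hkn)
  have hsq2 := hsqrt2_bound
  have hsq6 := hsqrt6_bound
  have hsqp := hsqrtpi_bound
  have he2 := he2_bound
  have he4 := he4_bound
  have hep : (0:ℝ) < exp 1 := Real.exp_pos 1
  rcases Nat.lt_or_ge m 2 with hm2 | hm2
  · interval_cases m
    have hd3 : 3 ≤ d := by omega
    have h1 : stirlingSeq d ≤ stirlingSeq 3 := hmono 3 d (by norm_num) hd3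
    have h3 : stirlingSeq 1 * stirlingSeq 3 ≤ 2 * √π := by
      rw [hs1, s3_eq]
      rw [_root_.div_mul_div_comm]
      rw [div_le_iff₀ (by positivity)]
      have key : exp 1 * (2 * exp 1 ^3) = 2 * exp 1 ^ 4 := by ring
      rw [key]
      nlinarith [Real.sqrt_nonneg (2:ℝ), Real.sqrt_nonneg (6:ℝ), Real.sqrt_nonneg π,
        mul_le_mul hsq2 hsq6 (by norm_num) (le_of_lt (Real.sqrt_pos.mpr (by norm_num)))]
    calc stirlingSeq 1 * stirlingSeq d ≤ stirlingSeq 1 * stirlingSeq 3 := by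
          apply mul_le_mul_of_nonneg_left h1 (le_of_lt (stirling_pos 1 (by norm_num)))
      _ ≤ 2 * √π := h3
  · rcases Nat.lt_or_ge d 2 with hd2 | hd2
    · interval_cases d
      have hm3 : 3 ≤ m := by omega
      have h1 : stirlingSeq m ≤ stirlingSeq 3 := hmono 3 m (by norm_num) hm3
      have h3 : stirlingSeq 3 * stirlingSeq 1 ≤ 2 * √π := by
        rw [hs1, s3_eq]
        rw [_root_.div_mul_div_comm]
        rw [div_le_iff₀ (by positivity)]
        have key : (2 * exp 1 ^3) * exp 1 = 2 * exp 1 ^ 4 := by ring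
        rw [key]
        nlinarith [Real.sqrt_nonneg (2:ℝ), Real.sqrt_nonneg (6:ℝ), Real.sqrt_nonneg π,
          mul_le_mul hsq6 hsq2 (by norm_num) (le_of_lt (Real.sqrt_pos.mpr (by norm_num)))]
      calc stirlingSeq m * stirlingSeq 1 ≤ stirlingSeq 3 * stirlingSeq 1 := by
            apply mul_le_mul_of_nonneg_right h1 (le_of_lt (stirling_pos 1 (by norm_num)))
        _ ≤ 2 * √π := h3
    · have h1 : stirlingSeq m ≤ stirlingSeq 2 := hmono 2 m (by norm_num) hm2
      have h2 : stirlingSeq d ≤ stirlingSeq 2 := hmono 2 d (by norm_num) hd2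
      have h3 : stirlingSeq 2 * stirlingSeq 2 ≤ 2 * √π := by
        rw [s2_eq]
        nlinarith
      calc stirlingSeq m * stirlingSeq d ≤ stirlingSeq 2 * stirlingSeq 2 := by
            apply mul_le_mul h1 h2 (le_of_lt (stirling_pos d (by omega)))
              (le_of_lt (stirling_pos 2 (by norm_num)))
        _ ≤ 2 * √π := h3


lemma alg1 (d m : ℕ) (e D M N sm sd : ℝ) (he : e ≠ 0) (hD : D ≠ 0) (hM : M ≠ 0) :
    (N/(M*D)) * (e^2*(M*N/D^2))^d * ((sd^2*((2*D)*((D/e)^d)^2)) * (sm^2*((2*M)*((M/e)^m)^2))) / 8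
      = ((sm*sd)^2 * (e^(2*d) * M^(2*m+d))) * (N^(d+1) / (2 * e^(2*m+2*d))) := by
  simp only [div_pow, mul_pow]
  field_simp
  ring

lemma alg2 (d m : ℕ) (e N : ℝ) (he : e ≠ 0) :
    π * ((2*N)*((N/e)^(m+d))^2) = (4*π*N^(2*m+d)) * (N^(d+1)/(2*e^(2*m+2*d))) := by
  simp only [div_pow]
  field_simp
  ring

end Aux

theorem stmt_2 (m d : ℕ) (hm : 1 ≤ m) (hd : 1 ≤ d) :
    ((m + d).choose d : ℝ) ≥
      (1 / Real.sqrt 8) * Real.sqrt (1/(d:ℝ) + 1/(m:ℝ)) *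
        (Real.exp 1 * Real.sqrt (((m:ℝ)/(d:ℝ))^2 + (m:ℝ)/(d:ℝ))) ^ d := by
  have hM : (0:ℝ) < m := by exact_mod_cast hm
  have hD : (0:ℝ) < d := by exact_mod_cast hd
  have hep : (0:ℝ) < exp 1 := Real.exp_pos 1
  by_cases hsmall : (m = 1 ∧ d ≤ 2) ∨ (d = 1 ∧ m ≤ 2)
  · -- small cases
    have hs8p : (0:ℝ) < √8 := Real.sqrt_pos.mpr (by norm_num)
    have hs8lb : (2.8:ℝ) ≤ √8 := (Real.le_sqrt (by norm_num) (by norm_num)).mpr (by norm_num)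
    have heub : exp 1 ≤ 2.7182818286 := le_of_lt Real.exp_one_lt_d9
    have case11 : ∀ (h : True), ((1 + 1).choose 1 : ℝ) ≥
        (1 / √8) * √(1/(1:ℝ) + 1/(1:ℝ)) * (exp 1 * √(((1:ℝ)/(1:ℝ))^2 + (1:ℝ)/(1:ℝ))) ^ 1 := by
      intro _
      have hch : (((1+1).choose 1 : ℕ) : ℝ) = 2 := by norm_num
      rw [ge_iff_le, hch]
      rw [show (1:ℝ)/1 + 1/1 = 2 by norm_num, show ((1:ℝ)/1)^2 + 1/1 = 2 by norm_num, pow_one]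
      rw [show (1/√8 * √2 * (exp 1 * √2) : ℝ) = (√2*√2*exp 1)/√8 by ring]
      rw [Real.mul_self_sqrt (by norm_num), div_le_iff₀ hs8p]
      nlinarith
    rcases hsmall with ⟨hm1, hd2⟩ | ⟨hd1, hm2⟩
    · subst hm1
      interval_cases d
      · -- m=1, d=1
        exact_mod_cast case11 trivial
      · -- m=1, d=2
        have hch : (((1+2).choose 2 : ℕ) : ℝ) = 3 := by norm_num
        rw [ge_iff_le]
        push_cast
        rw [hch]
        rw [show (1:ℝ)/2 + 1/1 = 3/2 by norm_num, show ((1:ℝ)/2)^2 + 1/2 = 3/4 by norm_num]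
        have h34 : (√(3/4):ℝ)^2 = 3/4 := Real.sq_sqrt (by norm_num)
        have h32 : (√(3/2):ℝ)^2 = 3/2 := Real.sq_sqrt (by norm_num)
        have h32n : (0:ℝ) ≤ √(3/2) := Real.sqrt_nonneg _
        have he2 := he2_bound
        rw [show (1/√8 * √(3/2) * (exp 1 * √(3/4))^2 : ℝ)
              = (√(3/2) * (exp 1^2 * (√(3/4))^2) * (1:ℝ))/√8 by ring]
        rw [h34, div_le_iff₀ hs8p]
        nlinarith [sq_nonneg (√(3/2) - 1.23), sq_nonneg (exp 1)]
    · subst hd1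
      interval_cases m
      · -- m=1, d=1
        exact_mod_cast case11 trivial
      · -- m=2, d=1
        have hch : (((2+1).choose 1 : ℕ) : ℝ) = 3 := by norm_num
        rw [ge_iff_le]
        push_cast
        rw [hch]
        rw [show (1:ℝ)/1 + 1/2 = 3/2 by norm_num, show ((2:ℝ)/1)^2 + 2/1 = 6 by norm_num,
          pow_one]
        have hprod : (√(3/2):ℝ) * √6 = 3 := by
          rw [← Real.sqrt_mul (by norm_num)]
          rw [show ((3:ℝ)/2*6) = 9 by norm_num]
          rw [show (9:ℝ) = 3^2 by norm_num, Real.sqrt_sq (by norm_num)]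
        rw [show (1/√8 * √(3/2) * (exp 1 * √6) : ℝ) = (√(3/2)*√6)*exp 1/√8 by ring]
        rw [hprod, div_le_iff₀ hs8p]
        nlinarith
  · -- main case
    have hconst : stirlingSeq m * stirlingSeq d ≤ 2 * √π :=
      const_bound m d hm hd hsmall
    have hsm := stirling_pos m hm
    have hsd := stirling_pos d hd
    -- factorial identities
    have hmfact : (m ! : ℝ) = stirlingSeq m * (√(2*m) * ((m:ℝ)/exp 1)^m) :=
      fact_eq_stirling m hm
    have hdfact : (d ! : ℝ) = stirlingSeq d * (√(2*d) * ((d:ℝ)/exp 1)^d) :=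
      fact_eq_stirling d hd
    have hNcast : ((m+d : ℕ) : ℝ) = (m:ℝ) + (d:ℝ) := by push_cast; ring
    have hNfact : ((m+d)! : ℝ)
        = stirlingSeq (m+d) * (√(2*((m:ℝ)+(d:ℝ))) * (((m:ℝ)+(d:ℝ))/exp 1)^(m+d)) := by
      rw [fact_eq_stirling (m+d) (by omega), hNcast]
    have hNlow : √π * (√(2*((m:ℝ)+(d:ℝ))) * (((m:ℝ)+(d:ℝ))/exp 1)^(m+d)) ≤ ((m+d)! : ℝ) := by
      rw [hNfact]
      apply mul_le_mul_of_nonneg_right (sqrtpi_le_stirling (m+d) (by omega)) (by positivity)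
    -- choose identity
    have hch : ((m + d).choose d : ℝ) * ((d ! : ℝ) * (m ! : ℝ)) = ((m+d)! : ℝ) := by
      have h0 : (m+d).choose d * d ! * m ! = (m+d)! := by
        have := Nat.choose_mul_factorial_mul_factorial (Nat.le_add_left d m)
        simpa [Nat.add_sub_cancel] using this
      push_cast [← h0]
      ring
    have hfpos : (0:ℝ) < (d ! : ℝ) * (m ! : ℝ) := by positivity
    rw [ge_iff_le, ← mul_le_mul_iff_of_pos_right hfpos, hch]
    -- rewrite sqrt argument
    have harg : 1/(d:ℝ) + 1/(m:ℝ) = ((m:ℝ)+(d:ℝ))/((m:ℝ)*(d:ℝ)) := by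
      rw [div_add_div _ _ (ne_of_gt hD) (ne_of_gt hM),
        div_eq_div_iff (by positivity) (by positivity)]
      ring
    rw [harg, hmfact, hdfact]
    -- abbreviations
    set M := (m:ℝ)
    set D := (d:ℝ)
    set N := M + D with hN
    set sm := stirlingSeq m
    set sd := stirlingSeq d
    have hNpos : (0:ℝ) < N := by rw [hN]; linarith
    -- main inequality (before using hNlow)
    have main : (1/√8 * √(N/(M*D)) * (exp 1 * √((M/D)^2 + M/D))^d)
        * ((sd * (√(2*D) * (D/exp 1)^d)) * (sm * (√(2*M) * (M/exp 1)^m)))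
        ≤ √π * (√(2*N) * (N/exp 1)^(m+d)) := by
      have haa : (0:ℝ) ≤ (M/D)^2 + M/D := by positivity
      have hL0 : (0:ℝ) ≤ (1/√8 * √(N/(M*D)) * (exp 1 * √((M/D)^2 + M/D))^d)
          * ((sd * (√(2*D) * (D/exp 1)^d)) * (sm * (√(2*M) * (M/exp 1)^m))) := by positivity
      have hR0 : (0:ℝ) ≤ √π * (√(2*N) * (N/exp 1)^(m+d)) := by positivity
      refine (pow_le_pow_iff_left₀ hL0 hR0 (two_ne_zero)).mp ?_
      have h8 : (√8:ℝ)^2 = 8 := Real.sq_sqrt (by norm_num)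
      have h2 : (√(N/(M*D)))^2 = N/(M*D) := Real.sq_sqrt (by positivity)
      have h3 : (√((M/D)^2+M/D))^2 = (M/D)^2+M/D := Real.sq_sqrt haa
      have h4 : (√(2*D))^2 = 2*D := Real.sq_sqrt (by positivity)
      have h5 : (√(2*M))^2 = 2*M := Real.sq_sqrt (by positivity)
      have h6 : (√(2*N))^2 = 2*N := Real.sq_sqrt (by positivity)
      have h7 : (√π)^2 = π := Real.sq_sqrt (le_of_lt Real.pi_pos)
      calc ((1/√8 * √(N/(M*D)) * (exp 1 * √((M/D)^2 + M/D))^d)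
            * ((sd * (√(2*D) * (D/exp 1)^d)) * (sm * (√(2*M) * (M/exp 1)^m))))^2
          = ((√(N/(M*D)))^2) * ((exp 1^2*(√((M/D)^2+M/D))^2))^d
            * ((sd^2*((√(2*D))^2*((D/exp 1)^d)^2)) * (sm^2*((√(2*M))^2*((M/exp 1)^m)^2)))
            / (√8)^2 := by ring
        _ = (N/(M*D)) * ((exp 1^2*((M/D)^2+M/D)))^d
            * ((sd^2*((2*D)*((D/exp 1)^d)^2)) * (sm^2*((2*M)*((M/exp 1)^m)^2))) / 8 := by
            rw [h8, h2, h3, h4, h5]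
        _ = (N/(M*D)) * (exp 1^2*(M*N/D^2))^d
            * ((sd^2*((2*D)*((D/exp 1)^d)^2)) * (sm^2*((2*M)*((M/exp 1)^m)^2))) / 8 := by
            rw [show (M/D)^2+M/D = M*N/D^2 by rw [hN]; field_simp]
        _ = ((sm*sd)^2 * (exp 1^(2*d) * M^(2*m+d))) * (N^(d+1) / (2 * exp 1^(2*m+2*d))) :=
            alg1 d m (exp 1) D M N sm sd (ne_of_gt hep) (ne_of_gt hD) (ne_of_gt hM)
        _ ≤ (4*π*N^(2*m+d)) * (N^(d+1) / (2 * exp 1^(2*m+2*d))) := by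
            apply mul_le_mul_of_nonneg_right _ (by positivity)
            have hc2 : (sm*sd)^2 ≤ 4*π := by
              have := pow_le_pow_left₀ (by positivity) hconst 2
              calc (sm*sd)^2 ≤ (2*√π)^2 := this
                _ = 4*π := by rw [mul_pow, h7]; ring
            have hkey : exp 1^(2*d) * M^(2*m+d) ≤ N^(2*m+d) := key_exp m d hm hd
            exact mul_le_mul hc2 hkey (by positivity) (by positivity)
        _ = π * ((2*N)*((N/exp 1)^(m+d))^2) := (alg2 d m (exp 1) N (ne_of_gt hep)).symm
        _ = (√π * (√(2*N) * (N/exp 1)^(m+d)))^2 := by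
            rw [show (√π * (√(2*N) * (N/exp 1)^(m+d)))^2
              = (√π)^2 * ((√(2*N))^2 * ((N/exp 1)^(m+d))^2) by ring, h7, h6]
    calc (1/√8 * √(N/(M*D)) * (exp 1 * √((M/D)^2 + M/D))^d)
          * ((sd * (√(2*D) * (D/exp 1)^d)) * (sm * (√(2*M) * (M/exp 1)^m)))
        ≤ √π * (√(2*N) * (N/exp 1)^(m+d)) := main
      _ ≤ ((m+d)! : ℝ) := hNlow
end
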